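/- Let N ≥ 2, let p be the uniform prior on {x_1,…,x_N}, let k ∈ {1,…,N−1}, and suppose ε_{k−1}(p) ≤ ε < ε_k(p), where ε_j(p) = −log((N−j)/N). Let P* be the mechanism with P*(i,j) = e^ε/N if (i − j) mod N ∈ {1,…,N−k}, P*(j,j) = 1 − e^ε(N−k)/N, and P*(i,j) = 0 otherwise. Then the mutual information between input and output under P* equals I(X;Y) = log N − H(q), where q ∈ ℝ^{N−k+1} is the probability vector with N−k coordinates equal to e^ε/N and one coordinate equal to 1 − (N−k)e^ε/N, and H(q) = −∑_r q_r log q_r (with 0·log 0 = 0) is the Shannon entropy. -/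

import Mathlib

open scoped BigOperators Classical

noncomputable section

/-- The output distribution `P_Y(j) = ∑ i, p i * P i j` induced by a prior `p`
and a mechanism `P`. -/
def outDist {N M : ℕ} (p : Fin N → ℝ) (P : Matrix (Fin N) (Fin M) ℝ) (j : Fin M) : ℝ :=
  ∑ i, p i * P i j

/-- A privacy mechanism: nonnegative entries, rows summing to one. -/
def IsMechanism {N M : ℕ} (P : Matrix (Fin N) (Fin M) ℝ) : Prop :=
  (∀ i j, 0 ≤ P i j) ∧ ∀ i, ∑ j, P i j = 1

/-- Pointwise maximal leakage to output `j`: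
`ℓ(X → y_j) = log((max_i P i j) / P_Y(j))`. -/
def pml {N M : ℕ} (p : Fin N → ℝ) (P : Matrix (Fin N) (Fin M) ℝ) (j : Fin M) : ℝ :=
  Real.log ((⨆ i, P i j) / outDist p P j)

/-- `P` satisfies `ε`-PML (w.r.t. prior `p`): the leakage of every output of
positive probability is at most `ε`. -/
def SatisfiesPML {N M : ℕ} (p : Fin N → ℝ) (ε : ℝ) (P : Matrix (Fin N) (Fin M) ℝ) : Prop :=
  ∀ j, 0 < outDist p P j → pml p P j ≤ ε

/-- A sublinear function `μ : [0,∞)^N → [0,∞)`: nonnegative, positively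
homogeneous and subadditive on the nonnegative orthant. -/
def Sublinear {N : ℕ} (μ : (Fin N → ℝ) → ℝ) : Prop :=
  (∀ x, (∀ i, 0 ≤ x i) → 0 ≤ μ x) ∧
  (∀ (c : ℝ), 0 ≤ c → ∀ x, (∀ i, 0 ≤ x i) → μ (c • x) = c * μ x) ∧
  (∀ x y, (∀ i, 0 ≤ x i) → (∀ i, 0 ≤ y i) → μ (x + y) ≤ μ x + μ y)

/-- The sub-convex utility associated with `μ`: `U(P) = ∑ j, μ(P_j)` where
`P_j` is the `j`-th column of `P`. -/
def utility {N M : ℕ} (μ : (Fin N → ℝ) → ℝ) (P : Matrix (Fin N) (Fin M) ℝ) : ℝ :=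
  ∑ j, μ (fun i => P i j)

end

/-- The cyclic mechanism of Theorem 5 for uniform priors. -/
noncomputable def cyclicMech (N k : ℕ) (ε : ℝ) : Matrix (Fin N) (Fin N) ℝ :=
  Matrix.of fun i j =>
    if 1 ≤ ((i : ℕ) + N - (j : ℕ)) % N ∧ ((i : ℕ) + N - (j : ℕ)) % N ≤ N - k then
      Real.exp ε / N
    else if i = j then 1 - Real.exp ε * ((N - k : ℕ) : ℝ) / N
    else 0

/-- Mutual information between input and output:
`I(X;Y) = ∑_{i,j : P i j > 0} p_i P_{ij} log(P_{ij} / P_Y(j))`. -/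
noncomputable def mutInf {N : ℕ} (p : Fin N → ℝ) (P : Matrix (Fin N) (Fin N) ℝ) : ℝ :=
  ∑ i, ∑ j, if 0 < P i j then p i * P i j * Real.log (P i j / outDist p P j) else 0

/-- The probability vector with `N−k` coordinates equal to `e^ε/N` and one
coordinate equal to `1 − (N−k)e^ε/N`. -/
noncomputable def qvec (N k : ℕ) (ε : ℝ) : Fin (N - k + 1) → ℝ := fun r =>
  if (r : ℕ) < N - k then Real.exp ε / N else 1 - ((N - k : ℕ) : ℝ) * Real.exp ε / N

/-- Shannon entropy `H(q) = −∑ q_r log q_r` (with the convention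
`0 · log 0 = 0`, realized by `Real.log 0 = 0`). -/
noncomputable def shannonEntropy {n : ℕ} (q : Fin n → ℝ) : ℝ :=
  -∑ r, q r * Real.log (q r)

section Aux

lemma fin_sub_val (N : ℕ) [NeZero N] (i j : Fin N) :
    ((i : ℕ) + N - (j : ℕ)) % N = ((i - j : Fin N) : ℕ) := by
  rw [Fin.sub_def]
  show _ = (N - (j:ℕ) + (i:ℕ)) % N
  congr 1
  omega

lemma count_sum (N k : ℕ) [NeZero N] (hk1 : 1 ≤ k) (x y : ℝ) :
    (∑ m : Fin N, if 1 ≤ (m : ℕ) ∧ (m : ℕ) ≤ N - k then x else if m = 0 then y else 0)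
      = ((N - k : ℕ) : ℝ) * x + y := by
  have hN : 0 < N := Nat.pos_of_ne_zero (NeZero.ne N)
  have hsplit : ∀ m : Fin N,
      (if 1 ≤ (m : ℕ) ∧ (m : ℕ) ≤ N - k then x else if m = 0 then y else 0)
        = (if 1 ≤ (m : ℕ) ∧ (m : ℕ) ≤ N - k then x else 0)
          + (if m = 0 then y else 0) := by
    intro m
    by_cases h : 1 ≤ (m : ℕ) ∧ (m : ℕ) ≤ N - k
    · have : m ≠ 0 := by
        intro hm
        rw [hm] at h
        simp [Fin.val_zero] at h
      simp [h, this]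
    · simp [h]
  rw [Finset.sum_congr rfl (fun m _ => hsplit m), Finset.sum_add_distrib]
  have h1 : (∑ m : Fin N, if 1 ≤ (m : ℕ) ∧ (m : ℕ) ≤ N - k then x else 0)
      = ((N - k : ℕ) : ℝ) * x := by
    rw [Fin.sum_univ_eq_sum_range (fun m => if 1 ≤ m ∧ m ≤ N - k then x else 0) N,
      ← Finset.sum_filter]
    have hf : (Finset.range N).filter (fun m => 1 ≤ m ∧ m ≤ N - k) = Finset.Icc 1 (N - k) := by
      ext m
      simp only [Finset.mem_filter, Finset.mem_range, Finset.mem_Icc]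
      omega
    rw [hf, Finset.sum_const, Nat.card_Icc]
    simp [mul_comm]
  have h2 : (∑ m : Fin N, if m = 0 then y else 0) = y := by
    simp
  rw [h1, h2]

lemma sum_sub_right {N : ℕ} [NeZero N] (j : Fin N) (g : Fin N → ℝ) :
    ∑ i : Fin N, g (i - j) = ∑ m, g m :=
  Fintype.sum_equiv (Equiv.subRight j) _ _ (fun _ => rfl)

lemma sum_sub_left {N : ℕ} [NeZero N] (i : Fin N) (g : Fin N → ℝ) :
    ∑ j : Fin N, g (i - j) = ∑ m, g m :=
  Fintype.sum_equiv (Equiv.subLeft i) _ _ (fun _ => rfl)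

end Aux

/-- **Utility of the uniform-prior mechanism.** For the uniform
prior and `ε_{k−1}(p) ≤ ε < ε_k(p)`, the mutual information of the cyclic
mechanism equals `log N − H(q)`. -/

theorem uniform_prior_mech_mutInf (N : ℕ) (hN : 2 ≤ N) (p : Fin N → ℝ)
    (hp : ∀ i, p i = 1 / N)
    (k : ℕ) (hk1 : 1 ≤ k) (hk2 : k ≤ N - 1)
    (ε : ℝ)
    (hεlo : -Real.log (((N - (k - 1) : ℕ) : ℝ) / N) ≤ ε)
    (hεhi : ε < -Real.log (((N - k : ℕ) : ℝ) / N)) :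
    mutInf p (cyclicMech N k ε) = Real.log N - shannonEntropy (qvec N k ε) := by
  haveI : NeZero N := ⟨by omega⟩
  have hNR : (0:ℝ) < N := by positivity
  have hNne : (N:ℝ) ≠ 0 := hNR.ne'
  set A : ℝ := Real.exp ε / N with hAdef
  set D : ℝ := 1 - Real.exp ε * ((N - k : ℕ) : ℝ) / N with hDdef
  have hA : 0 < A := by positivity
  have hcNk : (0:ℝ) < ((N - k : ℕ) : ℝ) := by
    have : 1 ≤ N - k := by omega
    exact_mod_cast Nat.lt_of_lt_of_le Nat.zero_lt_one this
  have hD : 0 < D := by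
    have hlog : -Real.log (((N - k : ℕ) : ℝ) / N) = Real.log ((N : ℝ) / ((N - k : ℕ) : ℝ)) := by
      rw [← Real.log_inv, inv_div]
    rw [hlog] at hεhi
    have hexp : Real.exp ε < (N : ℝ) / ((N - k : ℕ) : ℝ) := by
      have := Real.exp_lt_exp.mpr hεhi
      rwa [Real.exp_log (by positivity)] at this
    have h1 : Real.exp ε * ((N - k : ℕ) : ℝ) < N := (lt_div_iff₀ hcNk).mp hexp
    have : Real.exp ε * ((N - k : ℕ) : ℝ) / N < 1 := (div_lt_one hNR).mpr h1
    simpa [hDdef] using sub_pos.mpr this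
  have hsum1 : ((N - k : ℕ) : ℝ) * A + D = 1 := by
    rw [hAdef, hDdef]; ring
  -- entry characterization
  have hentry : ∀ i j : Fin N, cyclicMech N k ε i j
      = if 1 ≤ ((i - j : Fin N) : ℕ) ∧ ((i - j : Fin N) : ℕ) ≤ N - k then A
        else if i = j then D else 0 := by
    intro i j
    simp only [cyclicMech, Matrix.of_apply, fin_sub_val]
    rfl
  -- output distribution
  have hout : ∀ j, outDist p (cyclicMech N k ε) j = 1 / N := by
    intro j
    unfold outDist
    have h1 : ∀ i : Fin N, p i * cyclicMech N k ε i j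
        = (1/N) * (if 1 ≤ ((i - j : Fin N) : ℕ) ∧ ((i - j : Fin N) : ℕ) ≤ N - k then A
            else if (i - j : Fin N) = 0 then D else 0) := by
      intro i
      rw [hp, hentry]
      simp only [show (i = j) ↔ (i - j = 0) from sub_eq_zero.symm]
    rw [Finset.sum_congr rfl (fun i _ => h1 i), ← Finset.mul_sum]
    rw [sum_sub_right j
      (fun m => if 1 ≤ (m : ℕ) ∧ (m : ℕ) ≤ N - k then A else if m = 0 then D else 0)]
    rw [count_sum N k hk1 A D, hsum1, mul_one]
  -- main computation
  have hinner : ∀ i : Fin N,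
      (∑ j, if 0 < cyclicMech N k ε i j then
          p i * cyclicMech N k ε i j * Real.log (cyclicMech N k ε i j / outDist p (cyclicMech N k ε) j)
        else 0)
      = ((N - k : ℕ) : ℝ) * (1/N * A * Real.log (A / (1/N))) + 1/N * D * Real.log (D / (1/N)) := by
    intro i
    have h1 : ∀ j : Fin N,
        (if 0 < cyclicMech N k ε i j then
          p i * cyclicMech N k ε i j * Real.log (cyclicMech N k ε i j / outDist p (cyclicMech N k ε) j)
        else 0)
        = (if 1 ≤ ((i - j : Fin N) : ℕ) ∧ ((i - j : Fin N) : ℕ) ≤ N - k then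
            1/N * A * Real.log (A / (1/N))
          else if (i - j : Fin N) = 0 then 1/N * D * Real.log (D / (1/N)) else 0) := by
      intro j
      rw [hout, hp, hentry]
      by_cases h : 1 ≤ ((i - j : Fin N) : ℕ) ∧ ((i - j : Fin N) : ℕ) ≤ N - k
      · simp [h, hA]
      · by_cases h2 : i = j
        · have : (i - j : Fin N) = 0 := sub_eq_zero.mpr h2
          simp [h, h2, this, hD]
        · have : (i - j : Fin N) ≠ 0 := fun hc => h2 (sub_eq_zero.mp hc)
          simp [h, h2, this]
    rw [Finset.sum_congr rfl (fun j _ => h1 j)]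
    rw [sum_sub_left i
      (fun m => if 1 ≤ (m : ℕ) ∧ (m : ℕ) ≤ N - k then 1/N * A * Real.log (A / (1/N))
        else if m = 0 then 1/N * D * Real.log (D / (1/N)) else 0)]
    exact count_sum N k hk1 _ _
  have hLHS : mutInf p (cyclicMech N k ε)
      = (N:ℝ) * (((N - k : ℕ) : ℝ) * (1/N * A * Real.log (A / (1/N)))
          + 1/N * D * Real.log (D / (1/N))) := by
    unfold mutInf
    rw [Finset.sum_congr rfl (fun i _ => hinner i), Finset.sum_const]
    simp only [Finset.card_univ, Fintype.card_fin, nsmul_eq_mul]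
  -- entropy computation
  have hq : ∀ r : Fin (N - k + 1), qvec N k ε r * Real.log (qvec N k ε r)
      = if (r : ℕ) < N - k then A * Real.log A else D * Real.log D := by
    intro r
    unfold qvec
    by_cases h : (r : ℕ) < N - k
    · simp [h, hAdef]
    · have : 1 - ((N - k : ℕ) : ℝ) * Real.exp ε / N = D := by rw [hDdef]; ring
      simp [h, this]
  have hH : shannonEntropy (qvec N k ε)
      = -(((N - k : ℕ) : ℝ) * (A * Real.log A) + D * Real.log D) := by
    unfold shannonEntropy
    rw [Finset.sum_congr rfl (fun r _ => hq r)]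
    rw [Fin.sum_univ_eq_sum_range (fun r => if r < N - k then A * Real.log A else D * Real.log D)
      (N - k + 1), Finset.sum_range_succ]
    have h1 : (∑ r ∈ Finset.range (N - k), if r < N - k then A * Real.log A else D * Real.log D)
        = ((N - k : ℕ) : ℝ) * (A * Real.log A) := by
      rw [Finset.sum_congr rfl (fun r hr => if_pos (Finset.mem_range.mp hr)), Finset.sum_const]
      simp [mul_comm]
    rw [h1, if_neg (lt_irrefl _)]
  rw [hLHS, hH]
  have hlA : Real.log (A / (1/N)) = Real.log A + Real.log N := by
    rw [Real.log_div hA.ne' (by positivity), Real.log_div one_ne_zero hNne, Real.log_one]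
    ring
  have hlD : Real.log (D / (1/N)) = Real.log D + Real.log N := by
    rw [Real.log_div hD.ne' (by positivity), Real.log_div one_ne_zero hNne, Real.log_one]
    ring
  rw [hlA, hlD]
  have hexpand : (N:ℝ) * (((N - k : ℕ) : ℝ) * (1/N * A * (Real.log A + Real.log N))
      + 1/N * D * (Real.log D + Real.log N))
      = ((N - k : ℕ) : ℝ) * (A * Real.log A) + D * Real.log D
        + (((N - k : ℕ) : ℝ) * A + D) * Real.log N := by
    field_simp
    ring
  rw [hexpand, hsum1]
  ring
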